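/- arXiv:2305.18488 — 2 statements merged into one kernel-verified Lean document; each statement's English description precedes it below -/
import Mathlib

section
/- Let $\beta_1,\dots,\beta_s$ be i.i.d. random variables with the standard Laplace distribution (density $\frac{1}{2}e^{-|x|}$). Then for any fixed vector $\beta_0 \in \mathbb{R}^s$ and any $\epsilon>0$, the probability that $\|\beta - \beta_0\|_1 \le \epsilon$ is at least $\exp(-\|\beta_0\|_1 - \epsilon - s\log(s/\epsilon))$, where $\beta = (\beta_1,\dots,\beta_s)$. -/
open MeasureTheory ProbabilityTheory Real

/-- The standard Laplace distribution on `ℝ`, with density `(1/2) * exp (-|x|)`. -/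
noncomputable def laplaceMeasure : Measure ℝ :=
  volume.withDensity (fun x => ENNReal.ofReal ((1 / 2) * Real.exp (-|x|)))

lemma laplace_interval_ge (b δ : ℝ) (hδ : 0 < δ) :
    ENNReal.ofReal (δ * Real.exp (-|b| - δ)) ≤ laplaceMeasure {x | |x - b| ≤ δ} := by
  have hset : {x : ℝ | |x - b| ≤ δ} = Set.Icc (b - δ) (b + δ) := by
    ext x; simp [abs_sub_le_iff, Set.mem_Icc]; constructor <;> intro h <;> constructor <;> linarith [h.1, h.2]
  have hmeasset : MeasurableSet {x : ℝ | |x - b| ≤ δ} := by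
    rw [hset]; exact measurableSet_Icc
  rw [laplaceMeasure, withDensity_apply _ hmeasset]
  calc ENNReal.ofReal (δ * Real.exp (-|b| - δ))
      ≤ ∫⁻ x in {x : ℝ | |x - b| ≤ δ},
          ENNReal.ofReal ((1 / 2) * Real.exp (-(|b| + δ))) ∂volume := by
        rw [setLIntegral_const, hset, Real.volume_Icc]
        rw [← ENNReal.ofReal_mul (by positivity)]
        apply ENNReal.ofReal_le_ofReal
        apply le_of_eq
        have h1 : b + δ - (b - δ) = 2 * δ := by ring
        have h2 : -|b| - δ = -(|b| + δ) := by ring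
        rw [h1, h2]; ring
    _ ≤ _ := by
        apply setLIntegral_mono (by measurability)
        intro x hx
        apply ENNReal.ofReal_le_ofReal
        have hxb : |x| ≤ |b| + δ := by
          have := abs_sub_abs_le_abs_sub x b
          simp only [Set.mem_setOf_eq] at hx
          linarith
        have := Real.exp_le_exp.mpr (neg_le_neg hxb)
        nlinarith [Real.exp_pos (-|x|)]

/-- If `β 1, ..., β s` are i.i.d. standard Laplace random variables, then for any fixed
`β₀ ∈ ℝ^s` and any `ε > 0`, the probability that `‖β - β₀‖₁ ≤ ε` is at least
`exp (-‖β₀‖₁ - ε - s * log (s / ε))`. -/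
theorem laplace_l1_ball_prob_ge
    {Ω : Type*} [MeasureSpace Ω] [IsProbabilityMeasure (ℙ : Measure Ω)]
    (s : ℕ) (hs : 1 ≤ s) (β : Fin s → Ω → ℝ)
    (hmeas : ∀ i, Measurable (β i))
    (hindep : iIndepFun β ℙ)
    (hlaw : ∀ i, Measure.map (β i) ℙ = laplaceMeasure)
    (β₀ : Fin s → ℝ) (ε : ℝ) (hε : 0 < ε) :
    Real.exp (-(∑ i, |β₀ i|) - ε - s * Real.log (s / ε)) ≤
      (ℙ {ω | ∑ i, |β i ω - β₀ i| ≤ ε}).toReal := by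
  set δ : ℝ := ε / s with hδdef
  have hs0 : (0:ℝ) < s := by exact_mod_cast hs
  have hδ : 0 < δ := div_pos hε hs0
  -- per-coordinate probability bound
  have hcoord : ∀ i, ENNReal.ofReal (δ * Real.exp (-|β₀ i| - δ)) ≤
      ℙ (β i ⁻¹' {x | |x - β₀ i| ≤ δ}) := by
    intro i
    have hms : MeasurableSet {x : ℝ | |x - β₀ i| ≤ δ} :=
      (measurable_id.sub_const (β₀ i)).abs measurableSet_Iic
    have := laplace_interval_ge (β₀ i) δ hδ
    rwa [← hlaw i, Measure.map_apply (hmeas i) hms] at this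
  -- independence: probability of intersection
  have hms : ∀ i : Fin s, MeasurableSet {x : ℝ | |x - β₀ i| ≤ δ} := fun i =>
    (measurable_id.sub_const (β₀ i)).abs measurableSet_Iic
  have hinter : ℙ (⋂ i, β i ⁻¹' {x | |x - β₀ i| ≤ δ}) =
      ∏ i, ℙ (β i ⁻¹' {x | |x - β₀ i| ≤ δ}) := by
    have := (iIndepFun_iff_measure_inter_preimage_eq_mul.mp hindep) Finset.univ
      (sets := fun i => {x | |x - β₀ i| ≤ δ}) (fun i _ => hms i)
    simpa using this
  -- subset
  have hsub : (⋂ i, β i ⁻¹' {x | |x - β₀ i| ≤ δ}) ⊆ {ω | ∑ i, |β i ω - β₀ i| ≤ ε} := by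
    intro ω hω
    simp only [Set.mem_iInter, Set.mem_preimage, Set.mem_setOf_eq] at hω ⊢
    calc ∑ i, |β i ω - β₀ i| ≤ ∑ _i : Fin s, δ := Finset.sum_le_sum fun i _ => hω i
      _ = s * δ := by simp [mul_comm]
      _ = ε := by rw [hδdef]; field_simp
  -- main chain
  have hfin : ℙ {ω | ∑ i, |β i ω - β₀ i| ≤ ε} ≠ ⊤ := measure_ne_top _ _
  rw [← ENNReal.ofReal_le_iff_le_toReal hfin]
  have hexp_eq : Real.exp (-(∑ i, |β₀ i|) - ε - s * Real.log (s / ε)) =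
      ∏ i, (δ * Real.exp (-|β₀ i| - δ)) := by
    rw [Finset.prod_mul_distrib, Finset.prod_const, ← Real.exp_sum]
    have h1 : δ ^ s = Real.exp (-(s * Real.log (s / ε))) := by
      rw [← Real.exp_log (pow_pos hδ s), Real.log_pow]
      congr 1
      rw [hδdef, Real.log_div hε.ne' hs0.ne', Real.log_div hs0.ne' hε.ne']
      push_cast
      ring
    have h2 : ∑ i : Fin s, (-|β₀ i| - δ) = -(∑ i, |β₀ i|) - ε := by
      rw [Finset.sum_sub_distrib, ← Finset.sum_neg_distrib, Finset.sum_const]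
      simp only [Finset.card_univ, Fintype.card_fin]
      rw [nsmul_eq_mul, hδdef]; field_simp
    simp only [Finset.card_univ, Fintype.card_fin]
    rw [h1, h2, ← Real.exp_add]
    ring_nf
  calc ENNReal.ofReal (Real.exp (-(∑ i, |β₀ i|) - ε - s * Real.log (s / ε)))
      = ∏ i, ENNReal.ofReal (δ * Real.exp (-|β₀ i| - δ)) := by
        rw [hexp_eq, ENNReal.ofReal_prod_of_nonneg (fun i _ => by positivity)]
    _ ≤ ∏ i, ℙ (β i ⁻¹' {x | |x - β₀ i| ≤ δ}) := Finset.prod_le_prod' fun i _ => hcoord i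
    _ = ℙ (⋂ i, β i ⁻¹' {x | |x - β₀ i| ≤ δ}) := hinter.symm
    _ ≤ _ := measure_mono hsub
end

section
/- Let $B \in \mathbb{R}^{p \times q}$, $B^\star \in \mathbb{R}^{p \times r}$ be matrices and $\psi, \psi^\star > 0$ scalars. Set $\Sigma = BB^\top + \psi I_p$ and $\Sigma^\star = B^\star(B^\star)^\top + \psi^\star I_p$. If $q + r \le p$, then $\|BB^\top - B^\star(B^\star)^\top\| \le 2\|\Sigma - \Sigma^\star\|$, where $\|\cdot\|$ denotes the spectral (operator) norm. -/
open Matrix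

/-- The spectral (ℓ²-operator) norm of a real matrix. -/
noncomputable def matSpectralNorm {p q : ℕ} (M : Matrix (Fin p) (Fin q) ℝ) : ℝ :=
  ‖(Matrix.toEuclideanLin M).toContinuousLinearMap‖

lemma spectralNorm_eq {p q : ℕ} (M : Matrix (Fin p) (Fin q) ℝ) :
    matSpectralNorm M =
      ‖(Matrix.toEuclideanLin.trans LinearMap.toContinuousLinearMap) M‖ := rfl

lemma spectralNorm_sub_le {p q : ℕ} (M N : Matrix (Fin p) (Fin q) ℝ) :
    matSpectralNorm (M - N) ≤ matSpectralNorm M + matSpectralNorm N := by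
  rw [spectralNorm_eq, spectralNorm_eq, spectralNorm_eq, map_sub]
  exact norm_sub_le _ _

lemma spectralNorm_smul_one_le {p : ℕ} (c : ℝ) :
    matSpectralNorm (c • (1 : Matrix (Fin p) (Fin p) ℝ)) ≤ |c| := by
  apply ContinuousLinearMap.opNorm_le_bound _ (abs_nonneg c)
  intro x
  have : (Matrix.toEuclideanLin (c • (1 : Matrix (Fin p) (Fin p) ℝ))).toContinuousLinearMap x
      = c • x := by
    simp [Matrix.toEuclideanLin_apply, Matrix.smul_mulVec, Matrix.one_mulVec]
  rw [this, norm_smul, Real.norm_eq_abs]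

/-- If `Σ = BBᵀ + ψI` and `Σ⋆ = B⋆(B⋆)ᵀ + ψ⋆I` with `rank B + rank B⋆ < p`, then
`‖BBᵀ - B⋆(B⋆)ᵀ‖ ≤ 2‖Σ - Σ⋆‖` in spectral norm. -/
theorem spectralNorm_lowRank_diff_le
    {p q r : ℕ} (B : Matrix (Fin p) (Fin q) ℝ) (Bs : Matrix (Fin p) (Fin r) ℝ)
    (ψ ψs : ℝ) (hψ : 0 < ψ) (hψs : 0 < ψs)
    (hrank : B.rank + Bs.rank < p) :
    matSpectralNorm (B * Bᵀ - Bs * Bsᵀ) ≤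
      2 * matSpectralNorm ((B * Bᵀ + ψ • (1 : Matrix (Fin p) (Fin p) ℝ)) -
        (Bs * Bsᵀ + ψs • (1 : Matrix (Fin p) (Fin p) ℝ))) := by
  set D : Matrix (Fin p) (Fin p) ℝ := B * Bᵀ - Bs * Bsᵀ with hD
  set c : ℝ := ψ - ψs with hc
  have hSig : (B * Bᵀ + ψ • (1 : Matrix (Fin p) (Fin p) ℝ)) -
      (Bs * Bsᵀ + ψs • (1 : Matrix (Fin p) (Fin p) ℝ)) = D + c • 1 := by
    rw [hD, hc, sub_smul]; abel
  rw [hSig]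
  -- find a nonzero vector in both kernels
  set K1 := LinearMap.ker (Bᵀ.mulVecLin) with hK1
  set K2 := LinearMap.ker (Bsᵀ.mulVecLin) with hK2
  have hfp : Module.finrank ℝ (Fin p → ℝ) = p := by simp
  have h1 : B.rank + Module.finrank ℝ K1 = p := by
    have := LinearMap.finrank_range_add_finrank_ker (Bᵀ.mulVecLin)
    rw [hfp] at this
    rw [← Matrix.rank_transpose B]
    exact this
  have h2 : Bs.rank + Module.finrank ℝ K2 = p := by
    have := LinearMap.finrank_range_add_finrank_ker (Bsᵀ.mulVecLin)
    rw [hfp] at this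
    rw [← Matrix.rank_transpose Bs]
    exact this
  have hsup : Module.finrank ℝ ↥(K1 ⊔ K2) ≤ p := by
    have := Submodule.finrank_le (K1 ⊔ K2)
    rwa [hfp] at this
  have hinf := Submodule.finrank_sup_add_finrank_inf_eq K1 K2
  have hpos : 0 < Module.finrank ℝ ↥(K1 ⊓ K2) := by omega
  have hne : K1 ⊓ K2 ≠ ⊥ := by
    intro h
    rw [h] at hpos
    simp at hpos
  obtain ⟨w, hwmem, hw0⟩ := Submodule.exists_mem_ne_zero_of_ne_bot hne
  have hw1 : Bᵀ *ᵥ w = 0 := hwmem.1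
  have hw2 : Bsᵀ *ᵥ w = 0 := hwmem.2
  -- the action of D + c•1 on w
  have hact : (D + c • (1 : Matrix (Fin p) (Fin p) ℝ)) *ᵥ w = c • w := by
    rw [Matrix.add_mulVec, hD, Matrix.sub_mulVec, ← Matrix.mulVec_mulVec,
      ← Matrix.mulVec_mulVec, hw1, hw2, Matrix.smul_mulVec, Matrix.one_mulVec]
    simp
  -- |c| ≤ matSpectralNorm (D + c•1)
  set T := (Matrix.toEuclideanLin (D + c • (1 : Matrix (Fin p) (Fin p) ℝ))).toContinuousLinearMap
    with hT
  set w' : EuclideanSpace ℝ (Fin p) := (WithLp.equiv 2 (Fin p → ℝ)).symm w with hw'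
  have hTw : T w' = c • w' := by
    rw [hT]
    show Matrix.toEuclideanLin _ _ = _
    rw [hw', WithLp.equiv_symm_apply, Matrix.toEuclideanLin_apply_piLp_toLp, hact]
    simp
  have hw'norm : 0 < ‖w'‖ := by
    rw [norm_pos_iff]
    simpa [hw'] using hw0
  have hcle : |c| ≤ matSpectralNorm (D + c • (1 : Matrix (Fin p) (Fin p) ℝ)) := by
    have h := T.le_opNorm w'
    rw [hTw, norm_smul, Real.norm_eq_abs] at h
    have : |c| * ‖w'‖ ≤ matSpectralNorm (D + c • (1 : Matrix (Fin p) (Fin p) ℝ)) * ‖w'‖ := h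
    exact le_of_mul_le_mul_right this hw'norm
  -- triangle inequality
  have htri : matSpectralNorm D ≤ matSpectralNorm (D + c • (1 : Matrix (Fin p) (Fin p) ℝ)) + |c| := by
    have : D = (D + c • (1 : Matrix (Fin p) (Fin p) ℝ)) - c • 1 := by abel
    calc matSpectralNorm D
        = matSpectralNorm ((D + c • (1 : Matrix (Fin p) (Fin p) ℝ)) - c • 1) := by rw [← this]
      _ ≤ matSpectralNorm (D + c • (1 : Matrix (Fin p) (Fin p) ℝ)) +
            matSpectralNorm (c • (1 : Matrix (Fin p) (Fin p) ℝ)) := spectralNorm_sub_le _ _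
      _ ≤ _ := by linarith [spectralNorm_smul_one_le (p := p) c]
  linarith
end
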